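/- Characterization of the null of zero local conditional distribution treatment effect without censoring: under the instrumental-variable assumptions, the following are equivalent: (a) for every y ∈ ℝ, E[(1{Y(1) ≤ y} − 1{Y(0) ≤ y}) · (T(1) − T(0)) | σ(X)] = 0 ℙ-almost surely; (b) for every y ∈ ℝ and every x ∈ ℝ^k, E[(Z / q(X) − (1 − Z) / (1 − q(X))) · 1{Y ≤ y} · 1{X ≤ x}] = 0. -/

import Mathlib

open MeasureTheory ProbabilityTheory

open MeasurableSpace in
lemma pi_boxes_generate (k : ℕ) :
    (inferInstance : MeasurableSpace (Fin k → ℝ)) =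
      .generateFrom {s | ∃ x : Fin k → ℝ, s = {u | ∀ j, u j ≤ x j}} := by
  refine le_antisymm ?_ (generateFrom_le ?_)
  · refine iSup_le fun j => ?_
    rw [show ((fun _ : Fin k => Real.measurableSpace) j)
        = MeasurableSpace.generateFrom (Set.range Set.Iic) from borel_eq_generateFrom_Iic ℝ,
      comap_generateFrom]
    refine generateFrom_le ?_
    rintro _ ⟨_, ⟨r, rfl⟩, rfl⟩
    have h : (fun u : Fin k → ℝ => u j) ⁻¹' Set.Iic r
        = ⋃ n : ℕ, {u : Fin k → ℝ | ∀ i, u i ≤ if i = j then r else n} := by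
      ext u
      simp only [Set.mem_preimage, Set.mem_Iic, Set.mem_iUnion, Set.mem_setOf_eq]
      constructor
      · intro h
        refine ⟨Finset.univ.sup fun i => ⌈u i⌉₊, fun i => ?_⟩
        by_cases hij : i = j
        · simpa [hij] using h
        · simp only [hij, if_false]
          exact (Nat.le_ceil (u i)).trans
            (Nat.cast_le.mpr (Finset.le_sup (f := fun i => ⌈u i⌉₊) (Finset.mem_univ i)))
      · rintro ⟨n, hn⟩
        simpa using hn j
    rw [h]
    exact MeasurableSet.iUnion fun n => measurableSet_generateFrom ⟨_, rfl⟩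
  · rintro _ ⟨x, rfl⟩
    have h : {u : Fin k → ℝ | ∀ j, u j ≤ x j} = ⋂ j, (fun u => u j) ⁻¹' Set.Iic (x j) := by
      ext; simp
    rw [h]
    exact MeasurableSet.iInter fun j => measurable_pi_apply j measurableSet_Iic

/-- The sub-σ-algebra generated by `X`. -/
def mXsig {Ω : Type*} {k : ℕ} (X : Ω → (Fin k → ℝ)) : MeasurableSpace Ω :=
  MeasurableSpace.comap X inferInstance

lemma box_measurable {k : ℕ} (x : Fin k → ℝ) :
    MeasurableSet {u : Fin k → ℝ | ∀ j, u j ≤ x j} := by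
  have h : {u : Fin k → ℝ | ∀ j, u j ≤ x j} = ⋂ j, (fun u => u j) ⁻¹' Set.Iic (x j) := by
    ext; simp
  rw [h]
  exact MeasurableSet.iInter fun j => measurable_pi_apply j measurableSet_Iic

/-- **Characterization of the null of zero local conditional distribution treatment effect,
no censoring**: under the instrumental-variable assumptions,
`E[(1{Y(1) ≤ y} − 1{Y(0) ≤ y}) · (T(1) − T(0)) | σ(X)] = 0` a.s. for all `y` iff
`E[(Z/q(X) − (1−Z)/(1−q(X))) · 1{Y ≤ y} · 1{X ≤ x}] = 0` for all `y, x`. -/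
theorem zero_local_conditional_DTE_characterization
    {Ω : Type*} [MeasurableSpace Ω] [StandardBorelSpace Ω] [Nonempty Ω]
    (μ : Measure Ω) [IsProbabilityMeasure μ] {k : ℕ}
    (X : Ω → (Fin k → ℝ)) (hX : Measurable X)
    (Z : Ω → ℝ) (hZ : Measurable Z) (hZ01 : ∀ ω, Z ω = 0 ∨ Z ω = 1)
    (T0 T1 : Ω → ℝ) (hT0 : Measurable T0) (hT1 : Measurable T1)
    (hT001 : ∀ ω, T0 ω = 0 ∨ T0 ω = 1) (hT101 : ∀ ω, T1 ω = 0 ∨ T1 ω = 1)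
    (Y0 Y1 : Ω → ℝ) (hY0 : Measurable Y0) (hY1 : Measurable Y1)
    (T : Ω → ℝ) (hT : ∀ ω, T ω = Z ω * T1 ω + (1 - Z ω) * T0 ω)
    (Y : Ω → ℝ) (hY : ∀ ω, Y ω = T ω * Y1 ω + (1 - T ω) * Y0 ω)
    (hiv : CondIndepFun (MeasurableSpace.comap X inferInstance) hX.comap_le
      (fun ω => (Y0 ω, Y1 ω, T0 ω, T1 ω)) Z μ)
    (ε : ℝ) (hε : 0 < ε) (hε2 : ε ≤ 1 / 2)
    (q : (Fin k → ℝ) → ℝ) (hq : Measurable q)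
    (hqX : (fun ω => q (X ω)) =ᵐ[μ] μ[Z | MeasurableSpace.comap X inferInstance])
    (hoverlap : ∀ᵐ ω ∂μ, ε ≤ q (X ω) ∧ q (X ω) ≤ 1 - ε)
    (hmono : ∀ᵐ ω ∂μ, T0 ω ≤ T1 ω) :
    (∀ y : ℝ,
        μ[(fun ω => ((if Y1 ω ≤ y then (1 : ℝ) else 0) - (if Y0 ω ≤ y then (1 : ℝ) else 0))
              * (T1 ω - T0 ω)) | MeasurableSpace.comap X inferInstance]
          =ᵐ[μ] (0 : Ω → ℝ))
      ↔
    (∀ (y : ℝ) (x : Fin k → ℝ),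
        (∫ ω, (Z ω / q (X ω) - (1 - Z ω) / (1 - q (X ω)))
            * (if Y ω ≤ y then (1 : ℝ) else 0)
            * (if ∀ j, X ω j ≤ x j then (1 : ℝ) else 0) ∂μ) = 0) := by
  classical
  have hmeq : MeasurableSpace.comap X inferInstance = mXsig X := rfl
  rw [hmeq] at hqX ⊢
  have hm : mXsig X ≤ ‹MeasurableSpace Ω› := hX.comap_le
  haveI : SigmaFinite (μ.trim hm) := by infer_instance
  set V : Ω → ℝ × ℝ × ℝ × ℝ := fun ω => (Y0 ω, Y1 ω, T0 ω, T1 ω) with hV_def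
  have hVm : Measurable V := (hY0.prodMk (hY1.prodMk (hT0.prodMk hT1)))
  have hTm : Measurable T := by
    have : T = fun ω => Z ω * T1 ω + (1 - Z ω) * T0 ω := funext hT
    rw [this]; exact (hZ.mul hT1).add ((measurable_const.sub hZ).mul hT0)
  have hYm : Measurable Y := by
    have : Y = fun ω => T ω * Y1 ω + (1 - T ω) * Y0 ω := funext hY
    rw [this]; exact (hTm.mul hY1).add ((measurable_const.sub hTm).mul hY0)
  have hqXm : Measurable[mXsig X] fun ω => q (X ω) := fun s hs => ⟨q ⁻¹' s, hq hs, rfl⟩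
  have hZb : ∀ ω, |Z ω| ≤ 1 := fun ω => by rcases hZ01 ω with h | h <;> simp [h]
  have hbint : ∀ {g : Ω → ℝ}, Measurable g → ∀ C : ℝ, (∀ᵐ ω ∂μ, |g ω| ≤ C) → Integrable g μ :=
    fun {g} hg C hC => Integrable.mono' (integrable_const C) hg.aestronglyMeasurable
      (by simpa [Real.norm_eq_abs] using hC)
  -- notation for indicators
  have hεq : ∀ᵐ ω ∂μ, 0 < q (X ω) ∧ q (X ω) < 1 := by
    filter_upwards [hoverlap] with ω hω
    exact ⟨lt_of_lt_of_le hε hω.1, lt_of_le_of_lt hω.2 (by linarith)⟩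
  -- Step 1: conditional independence product rule
  have keyZ : ∀ s : Set (ℝ × ℝ × ℝ × ℝ), MeasurableSet s →
      μ[fun ω => Z ω * (V ⁻¹' s).indicator (fun _ => (1:ℝ)) ω | mXsig X]
        =ᵐ[μ] fun ω => q (X ω) * (μ[(V ⁻¹' s).indicator (fun _ => (1:ℝ)) | mXsig X]) ω := by
    intro s hs
    have h1 := (condIndepFun_iff_condExp_inter_preimage_eq_mul
      (hm' := hX.comap_le) hVm hZ).mp hiv s {1} hs (measurableSet_singleton 1)
    have e1 : (V ⁻¹' s ∩ Z ⁻¹' {1}).indicator (fun _ => (1:ℝ))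
        = fun ω => Z ω * (V ⁻¹' s).indicator (fun _ => (1:ℝ)) ω := by
      funext ω
      rcases hZ01 ω with h | h <;> by_cases hv : ω ∈ V ⁻¹' s <;>
        simp [Set.indicator_apply, Set.mem_inter_iff, hv, h]
    have e2 : (Z ⁻¹' ({1} : Set ℝ)).indicator (fun _ => (1:ℝ)) = Z := by
      funext ω; rcases hZ01 ω with h | h <;> simp [Set.indicator_apply, h]
    rw [e1, e2] at h1
    rw [hmeq] at h1
    refine h1.trans ?_
    filter_upwards [hqX] with ω hω
    rw [← hω, mul_comm]
  -- Step 2: pull-out claims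
  have claimZ : ∀ s : Set (ℝ × ℝ × ℝ × ℝ), MeasurableSet s →
      μ[fun ω => Z ω / q (X ω) * (V ⁻¹' s).indicator (fun _ => (1:ℝ)) ω | mXsig X]
        =ᵐ[μ] μ[(V ⁻¹' s).indicator (fun _ => (1:ℝ)) | mXsig X] := by
    intro s hs
    have him : Measurable ((V ⁻¹' s).indicator (fun _ => (1:ℝ))) :=
      measurable_const.indicator (hVm hs)
    have hib : ∀ ω, |(V ⁻¹' s).indicator (fun _ => (1:ℝ)) ω| ≤ 1 := fun ω => by
      by_cases hv : ω ∈ V ⁻¹' s <;> simp [Set.indicator_apply, hv]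
    have hZi : Integrable (fun ω => Z ω * (V ⁻¹' s).indicator (fun _ => (1:ℝ)) ω) μ :=
      hbint (hZ.mul him) 1 (ae_of_all _ fun ω => by
        rw [abs_mul]; exact mul_le_one₀ (hZb ω) (abs_nonneg _) (hib ω))
    have heq : (fun ω => Z ω / q (X ω) * (V ⁻¹' s).indicator (fun _ => (1:ℝ)) ω)
        = (fun ω => (q (X ω))⁻¹) * fun ω => Z ω * (V ⁻¹' s).indicator (fun _ => (1:ℝ)) ω := by
      funext ω; simp only [Pi.mul_apply, div_eq_mul_inv]; ring
    have hfg : Integrable ((fun ω => (q (X ω))⁻¹)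
        * fun ω => Z ω * (V ⁻¹' s).indicator (fun _ => (1:ℝ)) ω) μ := by
      refine hbint ((hq.comp hX).inv.mul (hZ.mul him)) ε⁻¹ ?_
      filter_upwards [hoverlap] with ω hω
      have hq0 : 0 < q (X ω) := lt_of_lt_of_le hε hω.1
      have h2 : |Z ω * (V ⁻¹' s).indicator (fun _ => (1:ℝ)) ω| ≤ 1 := by
        rw [abs_mul]; exact mul_le_one₀ (hZb ω) (abs_nonneg _) (hib ω)
      have h3 : |(q (X ω))⁻¹| ≤ ε⁻¹ := by
        rw [abs_of_pos (inv_pos.mpr hq0)]; exact inv_anti₀ hε hω.1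
      calc |((fun ω => (q (X ω))⁻¹)
            * fun ω => Z ω * (V ⁻¹' s).indicator (fun _ => (1:ℝ)) ω) ω|
          = |(q (X ω))⁻¹| * |Z ω * (V ⁻¹' s).indicator (fun _ => (1:ℝ)) ω| := by
            rw [Pi.mul_apply, abs_mul]
        _ ≤ ε⁻¹ * 1 := mul_le_mul h3 h2 (abs_nonneg _) (by positivity)
        _ = ε⁻¹ := mul_one _
    have h1 := condExp_mul_of_stronglyMeasurable_left (μ := μ)
      (Measurable.stronglyMeasurable hqXm.inv) hfg hZi
    rw [heq]
    refine h1.trans ?_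
    filter_upwards [keyZ s hs, hoverlap] with ω h2ω hov
    rw [Pi.mul_apply, h2ω]
    simp only [Pi.inv_apply]
    rw [inv_mul_cancel_left₀ (ne_of_gt (lt_of_lt_of_le hε hov.1))]
  have claimZ' : ∀ s : Set (ℝ × ℝ × ℝ × ℝ), MeasurableSet s →
      μ[fun ω => (1 - Z ω) / (1 - q (X ω)) * (V ⁻¹' s).indicator (fun _ => (1:ℝ)) ω | mXsig X]
        =ᵐ[μ] μ[(V ⁻¹' s).indicator (fun _ => (1:ℝ)) | mXsig X] := by
    intro s hs
    have him : Measurable ((V ⁻¹' s).indicator (fun _ => (1:ℝ))) :=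
      measurable_const.indicator (hVm hs)
    have hib : ∀ ω, |(V ⁻¹' s).indicator (fun _ => (1:ℝ)) ω| ≤ 1 := fun ω => by
      by_cases hv : ω ∈ V ⁻¹' s <;> simp [Set.indicator_apply, hv]
    have hii : Integrable ((V ⁻¹' s).indicator (fun _ => (1:ℝ))) μ :=
      hbint him 1 (ae_of_all _ hib)
    have hZi : Integrable (fun ω => Z ω * (V ⁻¹' s).indicator (fun _ => (1:ℝ)) ω) μ :=
      hbint (hZ.mul him) 1 (ae_of_all _ fun ω => by
        rw [abs_mul]; exact mul_le_one₀ (hZb ω) (abs_nonneg _) (hib ω))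
    have h1Zb : ∀ ω, |1 - Z ω| ≤ 1 := fun ω => by rcases hZ01 ω with h | h <;> simp [h]
    have hZi' : Integrable (fun ω => (1 - Z ω) * (V ⁻¹' s).indicator (fun _ => (1:ℝ)) ω) μ :=
      hbint ((measurable_const.sub hZ).mul him) 1 (ae_of_all _ fun ω => by
        rw [abs_mul]; exact mul_le_one₀ (h1Zb ω) (abs_nonneg _) (hib ω))
    have e0 : (fun ω => (1 - Z ω) * (V ⁻¹' s).indicator (fun _ => (1:ℝ)) ω)
        = (V ⁻¹' s).indicator (fun _ => (1:ℝ))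
          - fun ω => Z ω * (V ⁻¹' s).indicator (fun _ => (1:ℝ)) ω := by
      funext ω; simp only [Pi.sub_apply]; ring
    have h2' : μ[fun ω => (1 - Z ω) * (V ⁻¹' s).indicator (fun _ => (1:ℝ)) ω | mXsig X]
        =ᵐ[μ] fun ω => (1 - q (X ω))
          * (μ[(V ⁻¹' s).indicator (fun _ => (1:ℝ)) | mXsig X]) ω := by
      rw [e0]
      refine (condExp_sub hii hZi _).trans ?_
      filter_upwards [keyZ s hs] with ω hω
      rw [Pi.sub_apply, hω]; ring
    have heq : (fun ω => (1 - Z ω) / (1 - q (X ω)) * (V ⁻¹' s).indicator (fun _ => (1:ℝ)) ω)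
        = (fun ω => (1 - q (X ω))⁻¹)
          * fun ω => (1 - Z ω) * (V ⁻¹' s).indicator (fun _ => (1:ℝ)) ω := by
      funext ω; simp only [Pi.mul_apply, div_eq_mul_inv]; ring
    have hfg : Integrable ((fun ω => (1 - q (X ω))⁻¹)
        * fun ω => (1 - Z ω) * (V ⁻¹' s).indicator (fun _ => (1:ℝ)) ω) μ := by
      refine hbint ((measurable_const.sub (hq.comp hX)).inv.mul
        ((measurable_const.sub hZ).mul him)) ε⁻¹ ?_
      filter_upwards [hoverlap] with ω hω
      have hq0 : ε ≤ 1 - q (X ω) := by linarith [hω.2]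
      have h2 : |(1 - Z ω) * (V ⁻¹' s).indicator (fun _ => (1:ℝ)) ω| ≤ 1 := by
        rw [abs_mul]; exact mul_le_one₀ (h1Zb ω) (abs_nonneg _) (hib ω)
      have h3 : |(1 - q (X ω))⁻¹| ≤ ε⁻¹ := by
        rw [abs_of_pos (inv_pos.mpr (lt_of_lt_of_le hε hq0))]
        exact inv_anti₀ hε hq0
      calc |((fun ω => (1 - q (X ω))⁻¹)
            * fun ω => (1 - Z ω) * (V ⁻¹' s).indicator (fun _ => (1:ℝ)) ω) ω|
          = |(1 - q (X ω))⁻¹| * |(1 - Z ω) * (V ⁻¹' s).indicator (fun _ => (1:ℝ)) ω| := by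
            rw [Pi.mul_apply, abs_mul]
        _ ≤ ε⁻¹ * 1 := mul_le_mul h3 h2 (abs_nonneg _) (by positivity)
        _ = ε⁻¹ := mul_one _
    have h1 := condExp_mul_of_stronglyMeasurable_left (μ := μ)
      (Measurable.stronglyMeasurable (measurable_const.sub hqXm).inv) hfg hZi'
    rw [heq]
    refine h1.trans ?_
    filter_upwards [h2', hoverlap] with ω h2ω hov
    have hq0 : (0:ℝ) < 1 - q (X ω) := by linarith [hov.2, hε]
    rw [Pi.mul_apply, h2ω]
    simp only [Pi.inv_apply, Pi.sub_apply]
    rw [inv_mul_cancel_left₀ (ne_of_gt hq0)]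
  -- Step 3: the main conditional expectation identity
  set W : ℝ → Ω → ℝ := fun y ω =>
    (Z ω / q (X ω) - (1 - Z ω) / (1 - q (X ω))) * (if Y ω ≤ y then (1:ℝ) else 0) with hW_def
  set D : ℝ → Ω → ℝ := fun y ω =>
    ((if Y1 ω ≤ y then (1:ℝ) else 0) - (if Y0 ω ≤ y then (1:ℝ) else 0)) * (T1 ω - T0 ω)
    with hD_def
  have hWm : ∀ y, Measurable (W y) := fun y =>
    ((hZ.div (hq.comp hX)).sub ((measurable_const.sub hZ).div
      (measurable_const.sub (hq.comp hX)))).mul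
      (Measurable.ite (measurableSet_le hYm measurable_const) measurable_const measurable_const)
  have hWb : ∀ y, ∀ᵐ ω ∂μ, |W y ω| ≤ ε⁻¹ := by
    intro y
    filter_upwards [hoverlap] with ω hω
    have hind : |(if Y ω ≤ y then (1:ℝ) else 0)| ≤ 1 := by split <;> norm_num
    have hfac : |Z ω / q (X ω) - (1 - Z ω) / (1 - q (X ω))| ≤ ε⁻¹ := by
      rcases hZ01 ω with h | h
      · have hq0 : ε ≤ 1 - q (X ω) := by linarith [hω.2]
        rw [h]
        simp only [zero_div, sub_zero, zero_sub, abs_neg, one_div]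
        rw [abs_of_pos (inv_pos.mpr (lt_of_lt_of_le hε hq0))]
        exact inv_anti₀ hε hq0
      · rw [h]
        simp only [sub_self, zero_div, sub_zero, one_div]
        rw [abs_of_pos (inv_pos.mpr (lt_of_lt_of_le hε hω.1))]
        exact inv_anti₀ hε hω.1
    calc |W y ω| = |Z ω / q (X ω) - (1 - Z ω) / (1 - q (X ω))|
          * |(if Y ω ≤ y then (1:ℝ) else 0)| := abs_mul _ _
      _ ≤ ε⁻¹ * 1 := mul_le_mul hfac hind (abs_nonneg _) (by positivity)
      _ = ε⁻¹ := mul_one _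
  have hWint : ∀ y, Integrable (W y) μ := fun y => hbint (hWm y) ε⁻¹ (hWb y)
  have hDm : ∀ y, Measurable (D y) := fun y =>
    (((Measurable.ite (measurableSet_le hY1 measurable_const) measurable_const
        measurable_const).sub (Measurable.ite (measurableSet_le hY0 measurable_const)
        measurable_const measurable_const)).mul (hT1.sub hT0))
  have hDb : ∀ y ω, |D y ω| ≤ 1 := by
    intro y ω
    simp only [hD_def]
    rcases hT001 ω with h0 | h0 <;> rcases hT101 ω with h1 | h1 <;>
      rcases le_or_gt (Y1 ω) y with hy1 | hy1 <;> rcases le_or_gt (Y0 ω) y with hy0 | hy0 <;>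
      simp [h0, h1, hy0, hy1, not_le.mpr] <;> norm_num
  have hDint : ∀ y, Integrable (D y) μ := fun y => hbint (hDm y) 1 (ae_of_all _ (hDb y))
  have hiint : ∀ s : Set (ℝ × ℝ × ℝ × ℝ), MeasurableSet s →
      Integrable ((V ⁻¹' s).indicator (fun _ => (1:ℝ))) μ := fun s hs =>
    hbint (measurable_const.indicator (hVm hs)) 1 (ae_of_all _ fun ω => by
      by_cases hv : ω ∈ V ⁻¹' s <;> simp [Set.indicator_apply, hv])
  have hint1 : ∀ s : Set (ℝ × ℝ × ℝ × ℝ), MeasurableSet s →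
      Integrable (fun ω => Z ω / q (X ω) * (V ⁻¹' s).indicator (fun _ => (1:ℝ)) ω) μ := by
    intro s hs
    refine hbint ((hZ.div (hq.comp hX)).mul (measurable_const.indicator (hVm hs))) ε⁻¹ ?_
    filter_upwards [hoverlap] with ω hω
    have hib : |(V ⁻¹' s).indicator (fun _ => (1:ℝ)) ω| ≤ 1 := by
      by_cases hv : ω ∈ V ⁻¹' s <;> simp [Set.indicator_apply, hv]
    have hfac : |Z ω / q (X ω)| ≤ ε⁻¹ := by
      rcases hZ01 ω with h | h <;> rw [h]
      · simp only [zero_div, abs_zero]; positivity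
      · rw [one_div, abs_of_pos (inv_pos.mpr (lt_of_lt_of_le hε hω.1))]
        exact inv_anti₀ hε hω.1
    calc |Z ω / q (X ω) * (V ⁻¹' s).indicator (fun _ => (1:ℝ)) ω|
        = |Z ω / q (X ω)| * |(V ⁻¹' s).indicator (fun _ => (1:ℝ)) ω| := abs_mul _ _
      _ ≤ ε⁻¹ * 1 := mul_le_mul hfac hib (abs_nonneg _) (by positivity)
      _ = ε⁻¹ := mul_one _
  have hint2 : ∀ s : Set (ℝ × ℝ × ℝ × ℝ), MeasurableSet s →
      Integrable (fun ω => (1 - Z ω) / (1 - q (X ω)) * (V ⁻¹' s).indicator (fun _ => (1:ℝ)) ω)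
        μ := by
    intro s hs
    refine hbint (((measurable_const.sub hZ).div (measurable_const.sub (hq.comp hX))).mul
      (measurable_const.indicator (hVm hs))) ε⁻¹ ?_
    filter_upwards [hoverlap] with ω hω
    have hib : |(V ⁻¹' s).indicator (fun _ => (1:ℝ)) ω| ≤ 1 := by
      by_cases hv : ω ∈ V ⁻¹' s <;> simp [Set.indicator_apply, hv]
    have hq0 : ε ≤ 1 - q (X ω) := by linarith [hω.2]
    have hfac : |(1 - Z ω) / (1 - q (X ω))| ≤ ε⁻¹ := by
      rcases hZ01 ω with h | h <;> rw [h]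
      · rw [sub_zero, one_div, abs_of_pos (inv_pos.mpr (lt_of_lt_of_le hε hq0))]
        exact inv_anti₀ hε hq0
      · simp only [sub_self, zero_div, abs_zero]; positivity
    calc |(1 - Z ω) / (1 - q (X ω)) * (V ⁻¹' s).indicator (fun _ => (1:ℝ)) ω|
        = |(1 - Z ω) / (1 - q (X ω))| * |(V ⁻¹' s).indicator (fun _ => (1:ℝ)) ω| := abs_mul _ _
      _ ≤ ε⁻¹ * 1 := mul_le_mul hfac hib (abs_nonneg _) (by positivity)
      _ = ε⁻¹ := mul_one _
  have hcond : ∀ y : ℝ, μ[W y | mXsig X] =ᵐ[μ] μ[D y | mXsig X] := by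
    intro y
    set s1 : Set (ℝ × ℝ × ℝ × ℝ) := {v | v.2.1 ≤ y ∧ v.2.2.2 = 1} with hs1_def
    set s2 : Set (ℝ × ℝ × ℝ × ℝ) := {v | v.1 ≤ y ∧ v.2.2.2 = 0} with hs2_def
    set s3 : Set (ℝ × ℝ × ℝ × ℝ) := {v | v.2.1 ≤ y ∧ v.2.2.1 = 1} with hs3_def
    set s4 : Set (ℝ × ℝ × ℝ × ℝ) := {v | v.1 ≤ y ∧ v.2.2.1 = 0} with hs4_def
    have hs1 : MeasurableSet s1 :=
      (measurableSet_le measurable_snd.fst measurable_const).inter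
        (measurable_snd.snd.snd (measurableSet_singleton 1))
    have hs2 : MeasurableSet s2 :=
      (measurableSet_le measurable_fst measurable_const).inter
        (measurable_snd.snd.snd (measurableSet_singleton 0))
    have hs3 : MeasurableSet s3 :=
      (measurableSet_le measurable_snd.fst measurable_const).inter
        (measurable_snd.snd.fst (measurableSet_singleton 1))
    have hs4 : MeasurableSet s4 :=
      (measurableSet_le measurable_fst measurable_const).inter
        (measurable_snd.snd.fst (measurableSet_singleton 0))
    set i1 := (V ⁻¹' s1).indicator (fun _ => (1:ℝ)) with hi1_def
    set i2 := (V ⁻¹' s2).indicator (fun _ => (1:ℝ)) with hi2_def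
    set i3 := (V ⁻¹' s3).indicator (fun _ => (1:ℝ)) with hi3_def
    set i4 := (V ⁻¹' s4).indicator (fun _ => (1:ℝ)) with hi4_def
    have hdecomp : W y = (fun ω => Z ω / q (X ω) * i1 ω + Z ω / q (X ω) * i2 ω)
        - fun ω => (1 - Z ω) / (1 - q (X ω)) * i3 ω + (1 - Z ω) / (1 - q (X ω)) * i4 ω := by
      funext ω
      simp only [hW_def, Pi.sub_apply, hi1_def, hi2_def, hi3_def, hi4_def, Set.indicator_apply,
        Set.mem_preimage, hs1_def, hs2_def, hs3_def, hs4_def, Set.mem_setOf_eq, hV_def]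
      rcases hZ01 ω with h | h
      · have hT' : T ω = T0 ω := by rw [hT ω, h]; ring
        rcases hT001 ω with h0 | h0
        · have hY' : Y ω = Y0 ω := by rw [hY ω, hT', h0]; ring
          simp only [h, h0, hY']; norm_num; split_ifs <;> simp
        · have hY' : Y ω = Y1 ω := by rw [hY ω, hT', h0]; ring
          simp only [h, h0, hY']; norm_num; split_ifs <;> simp
      · have hT' : T ω = T1 ω := by rw [hT ω, h]; ring
        rcases hT101 ω with h1 | h1
        · have hY' : Y ω = Y0 ω := by rw [hY ω, hT', h1]; ring
          simp only [h, h1, hY']; norm_num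
        · have hY' : Y ω = Y1 ω := by rw [hY ω, hT', h1]; ring
          simp only [h, h1, hY']; norm_num
    have hDdecomp : D y = (fun ω => i1 ω + i2 ω) - fun ω => i3 ω + i4 ω := by
      funext ω
      simp only [hD_def, Pi.sub_apply, hi1_def, hi2_def, hi3_def, hi4_def, Set.indicator_apply,
        Set.mem_preimage, hs1_def, hs2_def, hs3_def, hs4_def, Set.mem_setOf_eq, hV_def]
      rcases hT001 ω with h0 | h0 <;> rcases hT101 ω with h1 | h1 <;>
        simp [h0, h1] <;> ring
    have hAB : Integrable (fun ω => Z ω / q (X ω) * i1 ω + Z ω / q (X ω) * i2 ω) μ :=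
      (hint1 s1 hs1).add (hint1 s2 hs2)
    have hCE : Integrable
        (fun ω => (1 - Z ω) / (1 - q (X ω)) * i3 ω + (1 - Z ω) / (1 - q (X ω)) * i4 ω) μ :=
      (hint2 s3 hs3).add (hint2 s4 hs4)
    have h12 : Integrable (fun ω => i1 ω + i2 ω) μ := (hiint s1 hs1).add (hiint s2 hs2)
    have h34 : Integrable (fun ω => i3 ω + i4 ω) μ := (hiint s3 hs3).add (hiint s4 hs4)
    rw [hdecomp, hDdecomp]
    refine ((condExp_sub hAB hCE _).trans ?_).trans (condExp_sub h12 h34 _).symm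
    have hF : μ[(fun ω => Z ω / q (X ω) * i1 ω + Z ω / q (X ω) * i2 ω) | mXsig X]
        =ᵐ[μ] μ[fun ω => Z ω / q (X ω) * i1 ω | mXsig X]
          + μ[fun ω => Z ω / q (X ω) * i2 ω | mXsig X] :=
      condExp_add (hint1 s1 hs1) (hint1 s2 hs2) _
    have hG : μ[(fun ω => (1 - Z ω) / (1 - q (X ω)) * i3 ω
          + (1 - Z ω) / (1 - q (X ω)) * i4 ω) | mXsig X]
        =ᵐ[μ] μ[fun ω => (1 - Z ω) / (1 - q (X ω)) * i3 ω | mXsig X]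
          + μ[fun ω => (1 - Z ω) / (1 - q (X ω)) * i4 ω | mXsig X] :=
      condExp_add (hint2 s3 hs3) (hint2 s4 hs4) _
    have hF' : μ[(fun ω => i1 ω + i2 ω) | mXsig X]
        =ᵐ[μ] μ[i1 | mXsig X] + μ[i2 | mXsig X] := condExp_add (hiint s1 hs1) (hiint s2 hs2) _
    have hG' : μ[(fun ω => i3 ω + i4 ω) | mXsig X]
        =ᵐ[μ] μ[i3 | mXsig X] + μ[i4 | mXsig X] := condExp_add (hiint s3 hs3) (hiint s4 hs4) _
    filter_upwards [hF, hG, hF', hG', claimZ s1 hs1, claimZ s2 hs2, claimZ' s3 hs3,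
      claimZ' s4 hs4] with ω e1 e2 e3 e4 c1 c2 c3 c4
    simp only [Pi.sub_apply, Pi.add_apply] at *
    rw [e1, e2, e3, e4, c1, c2, c3, c4]
  -- Step 4: integral identity
  have key : ∀ (y : ℝ) (x : Fin k → ℝ),
      (∫ ω, (Z ω / q (X ω) - (1 - Z ω) / (1 - q (X ω)))
          * (if Y ω ≤ y then (1 : ℝ) else 0)
          * (if ∀ j, X ω j ≤ x j then (1 : ℝ) else 0) ∂μ)
        = ∫ ω in X ⁻¹' {u | ∀ j, u j ≤ x j}, (μ[D y | mXsig X]) ω ∂μ := by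
    intro y x
    have hCm : MeasurableSet[mXsig X] (X ⁻¹' {u | ∀ j, u j ≤ x j}) :=
      ⟨{u | ∀ j, u j ≤ x j}, box_measurable x, rfl⟩
    have hC : MeasurableSet (X ⁻¹' {u | ∀ j, u j ≤ x j}) := hm _ hCm
    calc (∫ ω, (Z ω / q (X ω) - (1 - Z ω) / (1 - q (X ω)))
            * (if Y ω ≤ y then (1 : ℝ) else 0)
            * (if ∀ j, X ω j ≤ x j then (1 : ℝ) else 0) ∂μ)
        = ∫ ω, (X ⁻¹' {u | ∀ j, u j ≤ x j}).indicator (W y) ω ∂μ := by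
          refine integral_congr_ae (ae_of_all _ fun ω => ?_)
          rcases em (∀ j, X ω j ≤ x j) with hx | hx <;>
            simp [Set.indicator_apply, Set.mem_preimage, Set.mem_setOf_eq, hx, hW_def]
      _ = ∫ ω in X ⁻¹' {u | ∀ j, u j ≤ x j}, W y ω ∂μ := integral_indicator hC
      _ = ∫ ω in X ⁻¹' {u | ∀ j, u j ≤ x j}, (μ[W y | mXsig X]) ω ∂μ :=
          (setIntegral_condExp hm (hWint y) hCm).symm
      _ = ∫ ω in X ⁻¹' {u | ∀ j, u j ≤ x j}, (μ[D y | mXsig X]) ω ∂μ :=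
          integral_congr_ae (ae_restrict_of_ae (hcond y))
  constructor
  · intro ha y x
    rw [key y x]
    have h0 : (μ[D y | mXsig X]) =ᵐ[μ] (0 : Ω → ℝ) := ha y
    calc ∫ ω in X ⁻¹' {u | ∀ j, u j ≤ x j}, (μ[D y | mXsig X]) ω ∂μ
        = ∫ ω in X ⁻¹' {u | ∀ j, u j ≤ x j}, (0:ℝ) ∂μ :=
          integral_congr_ae (ae_restrict_of_ae h0)
      _ = 0 := by simp
  · intro hb y
    show μ[D y | mXsig X] =ᵐ[μ] (0 : Ω → ℝ)
    have hfm : StronglyMeasurable[mXsig X] (μ[D y | mXsig X]) := stronglyMeasurable_condExp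
    have hfint : Integrable (μ[D y | mXsig X]) μ := integrable_condExp
    have hfma : Measurable (μ[D y | mXsig X]) := (hfm.mono hm).measurable
    have hgen : (mXsig X) = MeasurableSpace.generateFrom
        ((Set.preimage X) '' {s | ∃ x : Fin k → ℝ, s = {u | ∀ j, u j ≤ x j}}) := by
      show MeasurableSpace.comap X inferInstance = _
      rw [pi_boxes_generate k, MeasurableSpace.comap_generateFrom]
    have hpi : IsPiSystem
        ((Set.preimage X) '' {s | ∃ x : Fin k → ℝ, s = {u | ∀ j, u j ≤ x j}}) := by
      rintro _ ⟨_, ⟨x1, rfl⟩, rfl⟩ _ ⟨_, ⟨x2, rfl⟩, rfl⟩ -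
      refine ⟨{u | ∀ j, u j ≤ min (x1 j) (x2 j)}, ⟨fun j => min (x1 j) (x2 j), rfl⟩, ?_⟩
      ext ω
      simp [Set.mem_preimage, Set.mem_setOf_eq, le_min_iff, forall_and]
    have hS : ∀ t, MeasurableSet[mXsig X] t → ∫ ω in t, (μ[D y | mXsig X]) ω ∂μ = 0 := by
      intro t ht
      refine @MeasurableSpace.induction_on_inter Ω (mXsig X)
        (fun t _ => ∫ ω in t, (μ[D y | mXsig X]) ω ∂μ = 0) _ hgen hpi ?_ ?_ ?_ ?_ t ht
      · simp
      · rintro _ ⟨_, ⟨x, rfl⟩, rfl⟩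
        exact (key y x).symm.trans (hb y x)
      · intro t htm h0
        have hzero : ∀ n : ℕ, ∫ ω in X ⁻¹' {u | ∀ j, u j ≤ (n:ℝ)}, (μ[D y | mXsig X]) ω ∂μ
            = 0 := fun n => (key y (fun _ => (n:ℝ))).symm.trans (hb y _)
        have hmeas_n : ∀ n : ℕ, MeasurableSet (X ⁻¹' {u | ∀ j, u j ≤ (n:ℝ)}) :=
          fun n => hX (box_measurable (fun _ => (n:ℝ)))
        have hmon : Monotone (fun n : ℕ => X ⁻¹' {u | ∀ j, u j ≤ (n:ℝ)}) := by
          intro a b hab ω hω j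
          exact le_trans (hω j) (Nat.cast_le.mpr hab)
        have hU : (⋃ n : ℕ, X ⁻¹' {u | ∀ j, u j ≤ (n:ℝ)}) = Set.univ := by
          ext ω
          simp only [Set.mem_iUnion, Set.mem_preimage, Set.mem_setOf_eq, Set.mem_univ,
            iff_true]
          refine ⟨Finset.univ.sup fun i => ⌈X ω i⌉₊, fun j => ?_⟩
          exact (Nat.le_ceil (X ω j)).trans
            (Nat.cast_le.mpr (Finset.le_sup (f := fun i => ⌈X ω i⌉₊) (Finset.mem_univ j)))
        have h2 := tendsto_setIntegral_of_monotone hmeas_n hmon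
          (f := μ[D y | mXsig X]) (by rw [hU]; exact integrableOn_univ.mpr hfint)
        rw [hU, Measure.restrict_univ] at h2
        simp only [hzero] at h2
        have huniv : ∫ ω, (μ[D y | mXsig X]) ω ∂μ = 0 :=
          tendsto_nhds_unique h2 tendsto_const_nhds
        have hadd := integral_add_compl (hm t htm) hfint
        rw [huniv, h0] at hadd
        linarith
      · intro g hdisj hgm hg0
        rw [integral_iUnion (fun i => hm _ (hgm i)) hdisj hfint.integrableOn]
        simp only [hg0]
        exact tsum_zero
    have hP : MeasurableSet[mXsig X] {ω | 0 < (μ[D y | mXsig X]) ω} :=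
      hfm.measurable measurableSet_Ioi
    have hN : MeasurableSet[mXsig X] {ω | (μ[D y | mXsig X]) ω < 0} :=
      hfm.measurable measurableSet_Iio
    have hPz : μ {ω | 0 < (μ[D y | mXsig X]) ω} = 0 := by
      have hnn : 0 ≤ᵐ[μ.restrict {ω | 0 < (μ[D y | mXsig X]) ω}] (μ[D y | mXsig X]) := by
        filter_upwards [ae_restrict_mem (hm _ hP)] with ω hω
        exact le_of_lt hω
      have h1 := (setIntegral_eq_zero_iff_of_nonneg_ae hnn hfint.integrableOn).mp
        (hS _ hP)
      have h2 : ∀ᵐ ω ∂μ.restrict {ω | 0 < (μ[D y | mXsig X]) ω}, False := by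
        filter_upwards [h1, ae_restrict_mem (hm _ hP)] with ω h h'
        exact absurd h (ne_of_gt h')
      have h3 : μ.restrict {ω | 0 < (μ[D y | mXsig X]) ω} = 0 :=
        ae_eq_bot.mp (Filter.eventually_false_iff_eq_bot.mp h2)
      rw [← Measure.restrict_apply_self, h3]
      rfl
    have hNz : μ {ω | (μ[D y | mXsig X]) ω < 0} = 0 := by
      have hnn : 0 ≤ᵐ[μ.restrict {ω | (μ[D y | mXsig X]) ω < 0}]
          (fun ω => -(μ[D y | mXsig X]) ω) := by
        filter_upwards [ae_restrict_mem (hm _ hN)] with ω hω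
        simp only [Pi.zero_apply, neg_nonneg]
        exact le_of_lt hω
      have hiz : ∫ ω in {ω | (μ[D y | mXsig X]) ω < 0}, -(μ[D y | mXsig X]) ω ∂μ = 0 := by
        rw [integral_neg, hS _ hN, neg_zero]
      have h1 := (setIntegral_eq_zero_iff_of_nonneg_ae hnn
        hfint.neg.integrableOn).mp hiz
      have h2 : ∀ᵐ ω ∂μ.restrict {ω | (μ[D y | mXsig X]) ω < 0}, False := by
        filter_upwards [h1, ae_restrict_mem (hm _ hN)] with ω h h'
        have : (μ[D y | mXsig X]) ω = 0 := by
          have := neg_eq_zero.mp h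
          exact this
        exact absurd this (ne_of_lt h')
      have h3 : μ.restrict {ω | (μ[D y | mXsig X]) ω < 0} = 0 :=
        ae_eq_bot.mp (Filter.eventually_false_iff_eq_bot.mp h2)
      rw [← Measure.restrict_apply_self, h3]
      rfl
    have : μ {ω | (μ[D y | mXsig X]) ω ≠ 0} = 0 := by
      refine measure_mono_null ?_ (measure_union_null hPz hNz)
      intro ω hω
      rcases lt_or_gt_of_ne hω with h | h
      · exact Or.inr h
      · exact Or.inl h
    exact ae_iff.mpr (by simpa using this)
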